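/- Let G be a finitely generated nilpotent group of class at most 2 (i.e., G' ⊆ Z(G)) such that G' is cyclic and G/Z(G) is finite. Then every class-preserving automorphism of G is inner, i.e., Aut_c(G) = Inn(G). -/

import Mathlib

/-- The group of class-preserving automorphisms of `G`. -/
def AutC (G : Type*) [Group G] : Subgroup (MulAut G) where
  carrier := {α | ∀ g : G, ∃ h : G, α g = h * g * h⁻¹}
  one_mem' := by intro g; exact ⟨1, by simp⟩
  mul_mem' := by
    intro α β hα hβ g
    obtain ⟨k, hk⟩ := hβ g
    obtain ⟨m, hm⟩ := hα g
    refine ⟨α k * m, ?_⟩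
    show α (β g) = _
    rw [hk, map_mul, map_mul, map_inv, hm]
    group
  inv_mem' := by
    intro α hα g
    obtain ⟨h, hh⟩ := hα (α⁻¹ g)
    rw [MulAut.apply_inv_self] at hh
    refine ⟨h⁻¹, ?_⟩
    calc α⁻¹ g = h⁻¹ * (h * α⁻¹ g * h⁻¹) * h := by group
      _ = h⁻¹ * g * h := by rw [← hh]
      _ = h⁻¹ * g * (h⁻¹)⁻¹ := by rw [inv_inv]

/-- The group of inner automorphisms of `G`. -/
def Inn (G : Type*) [Group G] : Subgroup (MulAut G) :=
  (MulAut.conj : G →* MulAut G).range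

section Aux

open scoped commutatorElement

variable {G : Type*} [Group G]

private lemma myCommMem (g h : G) : ⁅g, h⁆ ∈ commutator G := by
  rw [commutator_def]
  exact Subgroup.commutator_mem_commutator (Subgroup.mem_top g) (Subgroup.mem_top h)

private lemma myCentral (h2 : commutator G ≤ Subgroup.center G) (g h x : G) :
    x * ⁅g, h⁆ = ⁅g, h⁆ * x :=
  Subgroup.mem_center_iff.mp (h2 (myCommMem g h)) x

private lemma myCommRight (h2 : commutator G ≤ Subgroup.center G) (h g₁ g₂ : G) :
    ⁅h, g₁ * g₂⁆ = ⁅h, g₁⁆ * ⁅h, g₂⁆ := by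
  have h1 : ⁅h, g₁ * g₂⁆ = ⁅h, g₁⁆ * (g₁ * ⁅h, g₂⁆ * g₁⁻¹) := by
    simp only [commutatorElement_def]; group
  rw [h1, myCentral h2 h g₂ g₁, mul_inv_cancel_right]

private lemma myCommLeft (h2 : commutator G ≤ Subgroup.center G) (h₁ h₂ g : G) :
    ⁅h₁ * h₂, g⁆ = ⁅h₁, g⁆ * ⁅h₂, g⁆ := by
  have h1 : ⁅h₁ * h₂, g⁆ = h₁ * ⁅h₂, g⁆ * h₁⁻¹ * ⁅h₁, g⁆ := by
    simp only [commutatorElement_def]; group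
  rw [h1, myCentral h2 h₂ g h₁, mul_inv_cancel_right, myCentral h2 h₁ g]

private lemma myCommOneRight (h : G) {z : G} (hz : z ∈ Subgroup.center G) : ⁅h, z⁆ = 1 :=
  commutatorElement_eq_one_iff_commute.mpr (Subgroup.mem_center_iff.mp hz h)

private lemma myCommOneLeft {z : G} (hz : z ∈ Subgroup.center G) (g : G) : ⁅z, g⁆ = 1 :=
  commutatorElement_eq_one_iff_commute.mpr (Subgroup.mem_center_iff.mp hz g).symm

private lemma myFiniteCommutator (h2 : commutator G ≤ Subgroup.center G)
    (hfin : Finite (G ⧸ Subgroup.center G)) : Finite (commutator G) := by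
  haveI := hfin
  have hsurj : Function.Surjective (QuotientGroup.mk : G → G ⧸ Subgroup.center G) :=
    QuotientGroup.mk_surjective
  set s : (G ⧸ Subgroup.center G) → G := Function.surjInv hsurj with hs_def
  have hs : ∀ g : G, ∃ z ∈ Subgroup.center G, g = s (QuotientGroup.mk g) * z := by
    intro g
    have h1 : (QuotientGroup.mk (s (QuotientGroup.mk g)) : G ⧸ Subgroup.center G)
        = QuotientGroup.mk g := Function.surjInv_eq hsurj _
    have hz : (s (QuotientGroup.mk g))⁻¹ * g ∈ Subgroup.center G := QuotientGroup.eq.mp h1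
    exact ⟨_, hz, by group⟩
  have hsub : commutatorSet G ⊆
      Set.range (fun p : (G ⧸ Subgroup.center G) × (G ⧸ Subgroup.center G) => ⁅s p.1, s p.2⁆) := by
    rintro x ⟨g, h, rfl⟩
    obtain ⟨z, hz, hgz⟩ := hs g
    obtain ⟨w, hw, hhw⟩ := hs h
    refine ⟨(QuotientGroup.mk g, QuotientGroup.mk h), ?_⟩
    show ⁅s _, s _⁆ = ⁅g, h⁆
    have e0 : ⁅g, h⁆ = ⁅s (↑g) * z, s (↑h) * w⁆ := by rw [← hgz, ← hhw]
    rw [e0, myCommLeft h2, myCommRight h2, myCommOneRight _ hw, mul_one,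
      myCommOneLeft hz, mul_one]
  haveI : Finite (commutatorSet G) := Set.Finite.to_subtype ((Set.finite_range _).subset hsub)
  infer_instance

private theorem key_lemma (h2 : commutator G ≤ Subgroup.center G)
    (hcyc : IsCyclic (commutator G)) (hfin : Finite (G ⧸ Subgroup.center G))
    (α : MulAut G) (hα : ∀ g : G, ∃ h : G, α g = h * g * h⁻¹) :
    ∃ h : G, ∀ g : G, α g = h * g * h⁻¹ := by
  classical
  haveI := hfin
  -- the quotient by the center is commutative
  have hAB : ∀ a b : G ⧸ Subgroup.center G, a * b = b * a := by
    intro a b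
    obtain ⟨x, rfl⟩ := QuotientGroup.mk_surjective a
    obtain ⟨y, rfl⟩ := QuotientGroup.mk_surjective b
    rw [← QuotientGroup.mk_mul, ← QuotientGroup.mk_mul]
    refine QuotientGroup.eq.mpr (h2 ?_)
    have h1 : (x * y)⁻¹ * (y * x) = ⁅y⁻¹, x⁻¹⁆ := by
      simp only [commutatorElement_def]; group
    rw [h1]; exact myCommMem _ _
  letI : CommGroup (G ⧸ Subgroup.center G) :=
    { (inferInstance : Group (G ⧸ Subgroup.center G)) with mul_comm := hAB }
  haveI : NeZero (Monoid.exponent (G ⧸ Subgroup.center G)) := ⟨Monoid.exponent_ne_zero_of_finite⟩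
  obtain ⟨e⟩ := CommGroup.monoidHom_mulEquiv_of_hasEnoughRootsOfUnity (G ⧸ Subgroup.center G) ℂ
  -- an injective character of the (finite cyclic) commutator subgroup
  haveI : Finite (commutator G) := myFiniteCommutator h2 hfin
  obtain ⟨c, hc⟩ := hcyc.exists_generator
  haveI : NeZero (orderOf c) := ⟨(orderOf_pos c).ne'⟩
  obtain ⟨ζ, hζ⟩ := HasEnoughRootsOfUnity.exists_primitiveRoot ℂ (orderOf c)
  have hpos : orderOf c ≠ 0 := NeZero.ne _
  have hζu : IsPrimitiveRoot (hζ.isUnit hpos).unit (orderOf c) := hζ.isUnit_unit hpos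
  have hdvd : orderOf (hζ.isUnit hpos).unit ∣ orderOf c := by
    rw [← hζu.eq_orderOf]
  let ι : ↥(commutator G) →* ℂˣ := monoidHomOfForallMemZpowers hc hdvd
  have hιc : ι c = (hζ.isUnit hpos).unit := monoidHomOfForallMemZpowers_apply_gen hc hdvd
  have hι : Function.Injective ι := by
    rw [injective_iff_map_eq_one]
    intro x hx
    obtain ⟨k, hk⟩ := Subgroup.mem_zpowers_iff.mp (hc x)
    have h1 : (hζ.isUnit hpos).unit ^ k = 1 := by rw [← hιc, ← map_zpow, hk, hx]
    have h2' : (orderOf c : ℤ) ∣ k := by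
      rw [hζu.eq_orderOf]; exact orderOf_dvd_iff_zpow_eq_one.mpr h1
    rw [← hk]
    exact orderOf_dvd_iff_zpow_eq_one.mp h2'
  -- the pairing induced by commutators
  let pair : G → G → ℂˣ := fun h g => ι ⟨⁅h, g⁆, myCommMem h g⟩
  have pair_mr : ∀ h g₁ g₂ : G, pair h (g₁ * g₂) = pair h g₁ * pair h g₂ := by
    intro h g₁ g₂
    show ι _ = ι _ * ι _
    rw [← map_mul]
    exact congrArg ι (Subtype.ext (myCommRight h2 h g₁ g₂))
  have pair_ml : ∀ h₁ h₂ g : G, pair (h₁ * h₂) g = pair h₁ g * pair h₂ g := by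
    intro h₁ h₂ g
    show ι _ = ι _ * ι _
    rw [← map_mul]
    exact congrArg ι (Subtype.ext (myCommLeft h2 h₁ h₂ g))
  have pair_oneR : ∀ (h : G) {z : G}, z ∈ Subgroup.center G → pair h z = 1 := by
    intro h z hz
    show ι _ = 1
    rw [show (⟨⁅h, z⁆, myCommMem h z⟩ : ↥(commutator G)) = 1 from
      Subtype.ext (myCommOneRight h hz), map_one]
  have pair_oneL : ∀ {z : G}, z ∈ Subgroup.center G → ∀ g : G, pair z g = 1 := by
    intro z hz g
    show ι _ = 1
    rw [show (⟨⁅z, g⁆, myCommMem z g⟩ : ↥(commutator G)) = 1 from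
      Subtype.ext (myCommOneLeft hz g), map_one]
  let homC : G → ((G ⧸ Subgroup.center G) →* ℂˣ) := fun h =>
    QuotientGroup.lift (Subgroup.center G) (MonoidHom.mk' (pair h) (pair_mr h))
      (fun z hz => pair_oneR h hz)
  have homC_mk : ∀ h g : G, homC h (↑g) = pair h g := fun h g => rfl
  let adG : G →* ((G ⧸ Subgroup.center G) →* ℂˣ) := MonoidHom.mk' homC (by
    intro h₁ h₂
    refine MonoidHom.ext fun a => ?_
    obtain ⟨g, rfl⟩ := QuotientGroup.mk_surjective a
    rw [MonoidHom.mul_apply, homC_mk, homC_mk, homC_mk, pair_ml])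
  have hadG1 : ∀ z ∈ Subgroup.center G, adG z = 1 := by
    intro z hz
    refine MonoidHom.ext fun a => ?_
    obtain ⟨g, rfl⟩ := QuotientGroup.mk_surjective a
    show pair z g = 1
    exact pair_oneL hz g
  let ad : (G ⧸ Subgroup.center G) →* ((G ⧸ Subgroup.center G) →* ℂˣ) :=
    QuotientGroup.lift _ adG hadG1
  have had_mk : ∀ (h g : G), ad ↑h ↑g = pair h g := fun h g => rfl
  have hadinj : Function.Injective ad := by
    rw [injective_iff_map_eq_one]
    intro a ha
    obtain ⟨h, rfl⟩ := QuotientGroup.mk_surjective a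
    rw [QuotientGroup.eq_one_iff, Subgroup.mem_center_iff]
    intro g
    have h1 : pair h g = 1 := by rw [← had_mk, ha]; rfl
    have h3 : (⟨⁅h, g⁆, myCommMem h g⟩ : ↥(commutator G)) = 1 := hι (by rw [map_one]; exact h1)
    have h4 : ⁅h, g⁆ = 1 := congrArg Subtype.val h3
    exact (commutatorElement_eq_one_iff_commute.mp h4).eq.symm
  have hadsurj : Function.Surjective ad :=
    (Finite.injective_iff_surjective_of_equiv e.symm.toEquiv).mp hadinj
  -- the homomorphism associated with the class-preserving automorphism
  have hfC : ∀ g : G, α g * g⁻¹ ∈ commutator G := by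
    intro g
    obtain ⟨h, hh⟩ := hα g
    rw [hh]
    exact myCommMem h g
  have hfmul : ∀ g k : G, α (g * k) * (g * k)⁻¹ = (α g * g⁻¹) * (α k * k⁻¹) := by
    intro g k
    have h1 : g⁻¹ * (α k * k⁻¹) = (α k * k⁻¹) * g⁻¹ :=
      Subgroup.mem_center_iff.mp (h2 (hfC k)) g⁻¹
    rw [map_mul, mul_inv_rev]
    calc (α g * α k) * (k⁻¹ * g⁻¹) = α g * ((α k * k⁻¹) * g⁻¹) := by group
      _ = α g * (g⁻¹ * (α k * k⁻¹)) := by rw [← h1]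
      _ = α g * g⁻¹ * (α k * k⁻¹) := by rw [mul_assoc]
  have hf1 : ∀ z ∈ Subgroup.center G, α z * z⁻¹ = 1 := by
    intro z hz
    obtain ⟨h, hh⟩ := hα z
    rw [hh, Subgroup.mem_center_iff.mp hz h]
    group
  let F : G →* ℂˣ := MonoidHom.mk' (fun g => ι ⟨α g * g⁻¹, hfC g⟩) (by
    intro g k
    rw [← map_mul]
    exact congrArg ι (Subtype.ext (hfmul g k)))
  let Fbar : (G ⧸ Subgroup.center G) →* ℂˣ := QuotientGroup.lift _ F (by
    intro z hz
    show ι _ = 1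
    rw [show (⟨α z * z⁻¹, hfC z⟩ : ↥(commutator G)) = 1 from Subtype.ext (hf1 z hz), map_one])
  obtain ⟨b, hb⟩ := hadsurj Fbar
  obtain ⟨b₀, rfl⟩ := QuotientGroup.mk_surjective b
  refine ⟨b₀, fun g => ?_⟩
  have h5 : pair b₀ g = ι ⟨α g * g⁻¹, hfC g⟩ := DFunLike.congr_fun hb (↑g : G ⧸ Subgroup.center G)
  have h6 : ⁅b₀, g⁆ = α g * g⁻¹ := congrArg Subtype.val (hι h5)
  have h7 : b₀ * g * b₀⁻¹ * g⁻¹ = α g * g⁻¹ := h6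
  calc α g = (α g * g⁻¹) * g := by group
    _ = (b₀ * g * b₀⁻¹ * g⁻¹) * g := by rw [h7]
    _ = b₀ * g * b₀⁻¹ := by group

end Aux

/-- For a finitely generated nilpotent group `G` of class at most 2 with `G'` cyclic and
`G/Z(G)` finite, every class-preserving automorphism of `G` is inner. -/
theorem autC_eq_inn (G : Type*) [Group G] [Group.FG G]
    (h2 : commutator G ≤ Subgroup.center G)
    (hcyc : IsCyclic (commutator G)) (hfin : Finite (G ⧸ Subgroup.center G)) :
    AutC G = Inn G := by
  apply le_antisymm
  · intro α hα
    obtain ⟨h, hh⟩ := key_lemma h2 hcyc hfin α hα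
    exact ⟨h, MulEquiv.ext fun g => by rw [MulAut.conj_apply]; exact (hh g).symm⟩
  · rintro α ⟨h, rfl⟩ g
    exact ⟨h, MulAut.conj_apply h g⟩
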